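/- Suppose Φ is an orthogonal basis of ℂ^n such that φ_μ ∈ Φ for every character μ of H and the assignment μ ↦ φ_μ is injective; set Φ₀ = Φ \ {φ_μ : μ ∈ Ĥ}, and for a character χ of G let m⁺(χ) = #{μ ∈ Ĥ : μ ∘ θ = χ}. Let 1 denote the trivial character of G. Then ∑_i (w i)(h i) − m⁺(1) · |G|²/m ≤ ∑_{φ ∈ Φ₀} |P_1(φ)|² / ⟨φ, φ⟩ ≤ |G| · ∑_i (w i)(h i) − m⁺(1) · |G|²/m, and the lower bound is an equality if and only if h i ≤ 1 for all i. (This is the bound of the paper's Corollary (cor:semistable), in the linear-algebra form in which it is proved, with the φ_μ the Eisenstein basis vectors and m = m(𝒪) the mass.) -/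

import Mathlib

open Finset

private lemma aux_char_abs {H : Type*} [CommGroup H] [Fintype H] (μ : H →* ℂˣ) (a : H) :
    ‖(μ a : ℂ)‖ = 1 := by
  have h1 : ((μ a : ℂ)) ^ Fintype.card H = 1 := by
    rw [← Units.val_pow_eq_pow_val, ← map_pow, pow_card_eq_one, map_one, Units.val_one]
  have h2 : ‖(μ a : ℂ)‖ ^ Fintype.card H = 1 := by
    rw [← norm_pow, h1, norm_one]
  have hc : Fintype.card H ≠ 0 := Fintype.card_ne_zero
  by_contra hne
  rcases lt_or_gt_of_ne hne with hlt | hgt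
  · have := pow_lt_one₀ (norm_nonneg _) hlt hc
    linarith
  · have := one_lt_pow₀ hgt hc
    linarith

private lemma aux_char_sum {G : Type*} [CommGroup G] [Fintype G] (χ : G →* ℂˣ) :
    (∑ t : G, ((χ t : ℂ))) = if χ = 1 then (Fintype.card G : ℂ) else 0 := by
  split_ifs with h
  · subst h; simp
  · have hne : (Units.coeHom ℂ).comp χ ≠ 1 := by
      intro hc
      apply h
      ext t
      have := DFunLike.congr_fun hc t
      simpa using Units.ext (by simpa using this)
    simpa using sum_hom_units_eq_zero ((Units.coeHom ℂ).comp χ) hne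
private lemma aux_parseval (n : ℕ) (w : Fin n → ℝ) (hw : ∀ i, 0 < w i)
    (Φ : Finset (Fin n → ℂ)) (hΦ0 : ∀ φ ∈ Φ, φ ≠ 0)
    (hΦorth : ∀ φ ∈ Φ, ∀ ψ ∈ Φ, φ ≠ ψ →
      ∑ i, ((w i : ℂ))⁻¹ * φ i * (starRingEnd ℂ) (ψ i) = 0)
    (hΦspan : Submodule.span ℂ (Φ : Set (Fin n → ℂ)) = ⊤)
    (ξ : Fin n → ℂ) :
    ∑ φ ∈ Φ, (‖∑ i, ((w i : ℂ))⁻¹ * φ i * (starRingEnd ℂ) (ξ i)‖) ^ 2 /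
        (∑ i, (w i)⁻¹ * ‖φ i‖ ^ 2)
      = ∑ i, (w i)⁻¹ * ‖ξ i‖ ^ 2 := by
  classical
  set ip : (Fin n → ℂ) → (Fin n → ℂ) → ℂ :=
    fun φ ψ => ∑ i, ((w i : ℂ))⁻¹ * φ i * (starRingEnd ℂ) (ψ i) with hip
  set N : (Fin n → ℂ) → ℝ := fun φ => ∑ i, (w i)⁻¹ * ‖φ i‖ ^ 2 with hN
  have hNc : ∀ φ : Fin n → ℂ, ip φ φ = ((N φ : ℝ) : ℂ) := by
    intro φ
    simp only [hip, hN]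
    push_cast
    refine Finset.sum_congr rfl fun i _ => ?_
    rw [mul_assoc, Complex.mul_conj]
    norm_cast
    rw [Complex.sq_norm]
  have hNpos : ∀ φ ∈ Φ, 0 < N φ := by
    intro φ hφ
    obtain ⟨i, hi⟩ := Function.ne_iff.1 (hΦ0 φ hφ)
    refine Finset.sum_pos' (fun j _ => ?_) ⟨i, Finset.mem_univ i, ?_⟩
    · have := (hw j).le
      positivity
    · have h1 : 0 < ‖φ i‖ := by
        simpa using norm_pos_iff.2 hi
      exact mul_pos (inv_pos.2 (hw i)) (pow_pos h1 2)
  have hxi : ξ ∈ Submodule.span ℂ (Φ : Set (Fin n → ℂ)) := hΦspan.symm ▸ Submodule.mem_top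
  obtain ⟨f, -, hf⟩ := Submodule.mem_span_finset.1 hxi
  have hpt : ∀ i, ξ i = ∑ φ ∈ Φ, f φ * φ i := by
    intro i
    rw [← hf]
    simp [Finset.sum_apply]
  have hexp : ∀ ψ : Fin n → ℂ, ip ξ ψ = ∑ φ ∈ Φ, f φ * ip φ ψ := by
    intro ψ
    simp only [hip]
    calc (∑ i, ((w i : ℂ))⁻¹ * ξ i * (starRingEnd ℂ) (ψ i))
        = ∑ i : Fin n, ∑ φ ∈ Φ, f φ * (((w i : ℂ))⁻¹ * φ i * (starRingEnd ℂ) (ψ i)) := by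
          refine Finset.sum_congr rfl fun i _ => ?_
          rw [hpt i, Finset.mul_sum, Finset.sum_mul]
          exact Finset.sum_congr rfl fun φ _ => by ring
      _ = ∑ φ ∈ Φ, ∑ i : Fin n, f φ * (((w i : ℂ))⁻¹ * φ i * (starRingEnd ℂ) (ψ i)) :=
          Finset.sum_comm
      _ = ∑ φ ∈ Φ, f φ * ∑ i, ((w i : ℂ))⁻¹ * φ i * (starRingEnd ℂ) (ψ i) := by
          exact Finset.sum_congr rfl fun φ _ => (Finset.mul_sum _ _ _).symm
  have hips : ∀ ψ ∈ Φ, ip ξ ψ = f ψ * ((N ψ : ℝ) : ℂ) := by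
    intro ψ hψ
    rw [hexp ψ, Finset.sum_eq_single ψ]
    · rw [hNc ψ]
    · intro φ hφ hne
      rw [show ip φ ψ = 0 from hΦorth φ hφ ψ hψ hne, mul_zero]
    · intro hψ'; exact absurd hψ hψ'
  have hconj : ∀ ψ : Fin n → ℂ, ip ψ ξ = (starRingEnd ℂ) (ip ξ ψ) := by
    intro ψ
    simp only [hip, map_sum]
    refine Finset.sum_congr rfl fun i _ => ?_
    simp only [map_mul, Complex.conj_conj, map_inv₀, Complex.conj_ofReal]
    ring
  have hxx : ip ξ ξ = ∑ ψ ∈ Φ, (starRingEnd ℂ) (f ψ) * (f ψ * ((N ψ : ℝ) : ℂ)) := by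
    rw [hexp ξ]
    refine Finset.sum_congr rfl fun ψ hψ => ?_
    rw [hconj ψ, hips ψ hψ, map_mul, Complex.conj_ofReal]
    ring
  have hreal : N ξ = ∑ ψ ∈ Φ, (‖f ψ‖) ^ 2 * N ψ := by
    have h4 := (hNc ξ).symm.trans hxx
    have h3 : ((N ξ : ℝ) : ℂ) = ((∑ ψ ∈ Φ, (‖f ψ‖) ^ 2 * N ψ : ℝ) : ℂ) := by
      rw [h4]
      push_cast
      refine Finset.sum_congr rfl fun ψ _ => ?_
      rw [← mul_assoc, mul_comm ((starRingEnd ℂ) (f ψ)) (f ψ), Complex.mul_conj]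
      norm_cast
      rw [Complex.sq_norm]
    exact_mod_cast h3
  show ∑ φ ∈ Φ, (‖ip φ ξ‖) ^ 2 / N φ = N ξ
  rw [hreal]
  refine Finset.sum_congr rfl fun ψ hψ => ?_
  have habs : ‖ip ψ ξ‖ = ‖f ψ‖ * N ψ := by
    rw [hconj ψ, Complex.norm_conj, hips ψ hψ, norm_mul, Complex.norm_real, Real.norm_eq_abs,
      abs_of_nonneg (hNpos ψ hψ).le]
  rw [habs]
  have hpos := hNpos ψ hψ
  field_simp


/- **Statement 6.** With the Eisenstein vectors `φ_μ (i) = μ (ν i)` contained in the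
orthogonal basis `Φ`, `Φ₀ = Φ \ {φ_μ}`, `m⁺(χ) = #{μ ∈ Ĥ : μ ∘ θ = χ}`, `m = ∑ (w i)⁻¹`,
and `1` the trivial character of `G`, one has
`∑_i (w i)(h i) − m⁺(1)|G|²/m ≤ ∑_{φ ∈ Φ₀} |P_1(φ)|²/⟨φ,φ⟩ ≤ |G| ∑_i (w i)(h i) − m⁺(1)|G|²/m`,
with equality in the lower bound if and only if `h i ≤ 1` for all `i`. -/
open scoped Classical in
theorem cuspidal_period_average_bounds
    (n : ℕ) (hn : 1 ≤ n) (w : Fin n → ℝ) (hw : ∀ i, 0 < w i)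
    (G : Type*) [CommGroup G] [Fintype G] [Fintype (G →* ℂˣ)]
    (H : Type*) [CommGroup H] [Fintype H] [Fintype (H →* ℂˣ)]
    (x : G → Fin n) (θ : G →* H) (ν : Fin n → H)
    (hν : ∀ t : G, ν (x t) = θ t)
    (Φ : Finset (Fin n → ℂ))
    (hΦ0 : ∀ φ ∈ Φ, φ ≠ 0)
    (hΦorth : ∀ φ ∈ Φ, ∀ ψ ∈ Φ, φ ≠ ψ →
      ∑ i, ((w i : ℂ))⁻¹ * φ i * (starRingEnd ℂ) (ψ i) = 0)
    (hΦspan : Submodule.span ℂ (Φ : Set (Fin n → ℂ)) = ⊤)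
    (hEis : ∀ μ : H →* ℂˣ, (fun i => ((μ (ν i) : ℂ))) ∈ Φ)
    (hinj : Function.Injective (fun (μ : H →* ℂˣ) => (fun i => ((μ (ν i) : ℂ))))) :
    (∑ i, w i * ((Finset.univ.filter (fun t : G => x t = i)).card : ℝ)
        - ((Finset.univ.filter (fun μ : H →* ℂˣ => μ.comp θ = (1 : G →* ℂˣ))).card : ℝ)
            * (Fintype.card G : ℝ) ^ 2 / (∑ i, (w i)⁻¹)
      ≤ ∑ φ ∈ Φ.filter (fun φ => ∀ μ : H →* ℂˣ, φ ≠ fun i => ((μ (ν i) : ℂ))),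
          ‖∑ t : G, φ (x t) * (((1 : G →* ℂˣ) t : ℂ))⁻¹‖ ^ 2 /
            (∑ i, (w i)⁻¹ * ‖φ i‖ ^ 2)) ∧
    (∑ φ ∈ Φ.filter (fun φ => ∀ μ : H →* ℂˣ, φ ≠ fun i => ((μ (ν i) : ℂ))),
          ‖∑ t : G, φ (x t) * (((1 : G →* ℂˣ) t : ℂ))⁻¹‖ ^ 2 /
            (∑ i, (w i)⁻¹ * ‖φ i‖ ^ 2)
      ≤ (Fintype.card G : ℝ)
            * ∑ i, w i * ((Finset.univ.filter (fun t : G => x t = i)).card : ℝ)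
        - ((Finset.univ.filter (fun μ : H →* ℂˣ => μ.comp θ = (1 : G →* ℂˣ))).card : ℝ)
            * (Fintype.card G : ℝ) ^ 2 / (∑ i, (w i)⁻¹)) ∧
    ((∑ φ ∈ Φ.filter (fun φ => ∀ μ : H →* ℂˣ, φ ≠ fun i => ((μ (ν i) : ℂ))),
          ‖∑ t : G, φ (x t) * (((1 : G →* ℂˣ) t : ℂ))⁻¹‖ ^ 2 /
            (∑ i, (w i)⁻¹ * ‖φ i‖ ^ 2)
      = ∑ i, w i * ((Finset.univ.filter (fun t : G => x t = i)).card : ℝ)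
          - ((Finset.univ.filter (fun μ : H →* ℂˣ => μ.comp θ = (1 : G →* ℂˣ))).card : ℝ)
              * (Fintype.card G : ℝ) ^ 2 / (∑ i, (w i)⁻¹))
      ↔ (∀ i, (Finset.univ.filter (fun t : G => x t = i)).card ≤ 1)) := by
  -- notation
  set h : Fin n → ℕ := fun i => (Finset.univ.filter (fun t : G => x t = i)).card with hh
  set ξ : Fin n → ℂ := fun i => ((w i * (h i : ℝ) : ℝ) : ℂ) with hξ
  -- the period as an inner product against ξ
  have hP : ∀ φ : Fin n → ℂ, (∑ t : G, φ (x t) * (((1 : G →* ℂˣ) t : ℂ))⁻¹)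
      = ∑ i, ((w i : ℂ))⁻¹ * φ i * (starRingEnd ℂ) (ξ i) := by
    intro φ
    have h1 : (∑ t : G, φ (x t) * (((1 : G →* ℂˣ) t : ℂ))⁻¹) = ∑ t : G, φ (x t) := by simp
    rw [h1, ← Finset.sum_fiberwise univ x (fun t => φ (x t))]
    refine Finset.sum_congr rfl fun i _ => ?_
    rw [Finset.sum_congr rfl (fun t ht => by rw [(Finset.mem_filter.1 ht).2] :
      ∀ t ∈ univ.filter fun t : G => x t = i, φ (x t) = φ i), Finset.sum_const, nsmul_eq_mul]
    show (((univ.filter fun t : G => x t = i).card : ℂ)) * φ i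
        = ((w i : ℂ))⁻¹ * φ i * (starRingEnd ℂ) ((w i * (h i : ℝ) : ℝ) : ℂ)
    rw [Complex.conj_ofReal]
    push_cast
    have hwi : (w i : ℂ) ≠ 0 := by exact_mod_cast (hw i).ne'
    rw [hh]
    push_cast
    field_simp
  -- Parseval
  have hpar := aux_parseval n w hw Φ hΦ0 hΦorth hΦspan ξ
  -- ‖ξ‖² = ∑ w h²
  have hNξ : (∑ i, (w i)⁻¹ * ‖ξ i‖ ^ 2) = ∑ i, w i * ((h i : ℝ)) ^ 2 := by
    refine Finset.sum_congr rfl fun i _ => ?_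
    rw [hξ]
    show (w i)⁻¹ * ‖((w i * (h i : ℝ) : ℝ) : ℂ)‖ ^ 2 = w i * ((h i : ℝ)) ^ 2
    rw [Complex.norm_real, Real.norm_eq_abs, sq_abs]
    have := (hw i).ne'
    field_simp
  -- the Eisenstein subfamily
  set E : Finset (Fin n → ℂ) :=
    Finset.univ.image (fun (μ : H →* ℂˣ) => (fun i => ((μ (ν i) : ℂ)))) with hE
  have hEsub : E ⊆ Φ := by
    intro φ hφ
    obtain ⟨μ, _, rfl⟩ := Finset.mem_image.1 hφ
    exact hEis μ
  have hfilter : Φ.filter (fun φ => ∀ μ : H →* ℂˣ, φ ≠ fun i => ((μ (ν i) : ℂ))) = Φ \ E := by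
    ext φ
    simp only [Finset.mem_filter, Finset.mem_sdiff, hE, Finset.mem_image, Finset.mem_univ,
      true_and, not_exists]
    exact and_congr_right fun _ => ⟨fun hne μ he => hne μ he.symm, fun hne μ he => hne μ he.symm⟩
  -- sum over the Eisenstein family
  set m : ℝ := ∑ i, (w i)⁻¹ with hm
  have hmpos : 0 < m := by
    rw [hm]
    refine Finset.sum_pos (fun i _ => inv_pos.2 (hw i)) ⟨⟨0, hn⟩, Finset.mem_univ _⟩
  set F : (Fin n → ℂ) → ℝ := fun φ =>
    ‖∑ t : G, φ (x t) * (((1 : G →* ℂˣ) t : ℂ))⁻¹‖ ^ 2 /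
      (∑ i, (w i)⁻¹ * ‖φ i‖ ^ 2) with hF
  have hEsum : ∑ φ ∈ E, F φ
      = ((Finset.univ.filter (fun μ : H →* ℂˣ => μ.comp θ = (1 : G →* ℂˣ))).card : ℝ)
          * ((Fintype.card G : ℝ) ^ 2 / m) := by
    rw [hE, Finset.sum_image (fun μ _ μ' _ hμ => hinj hμ)]
    have hterm : ∀ μ : H →* ℂˣ, F (fun i => ((μ (ν i) : ℂ)))
        = if μ.comp θ = 1 then (Fintype.card G : ℝ) ^ 2 / m else 0 := by
      intro μ
      have hnum : (∑ t : G, ((μ (ν (x t)) : ℂ)) * (((1 : G →* ℂˣ) t : ℂ))⁻¹)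
          = if μ.comp θ = 1 then (Fintype.card G : ℂ) else 0 := by
        rw [show (∑ t : G, ((μ (ν (x t)) : ℂ)) * (((1 : G →* ℂˣ) t : ℂ))⁻¹)
            = ∑ t : G, (((μ.comp θ) t : ℂ)) from
          Finset.sum_congr rfl fun t _ => by simp [hν t]]
        exact aux_char_sum (μ.comp θ)
      have hden : (∑ i, (w i)⁻¹ * ‖(μ (ν i) : ℂ)‖ ^ 2) = m := by
        rw [hm]
        refine Finset.sum_congr rfl fun i _ => ?_
        rw [aux_char_abs]
        ring
      rw [hF]
      show ‖∑ t : G, ((μ (ν (x t)) : ℂ)) * (((1 : G →* ℂˣ) t : ℂ))⁻¹‖ ^ 2 /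
          (∑ i, (w i)⁻¹ * ‖(μ (ν i) : ℂ)‖ ^ 2) = _
      rw [hnum, hden]
      split_ifs with hμ
      · rw [Complex.norm_natCast]
      · simp
    rw [Finset.sum_congr rfl fun μ _ => hterm μ, ← Finset.sum_filter, Finset.sum_const,
      nsmul_eq_mul]
  -- splitting
  have hsplit : ∑ φ ∈ Φ \ E, F φ = (∑ i, w i * ((h i : ℝ)) ^ 2)
      - ((Finset.univ.filter (fun μ : H →* ℂˣ => μ.comp θ = (1 : G →* ℂˣ))).card : ℝ)
          * ((Fintype.card G : ℝ) ^ 2 / m) := by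
    have h2 : ∑ φ ∈ Φ \ E, F φ + ∑ φ ∈ E, F φ = ∑ φ ∈ Φ, F φ := Finset.sum_sdiff hEsub
    have h3 : ∑ φ ∈ Φ, F φ = ∑ i, w i * ((h i : ℝ)) ^ 2 := by
      rw [← hNξ, ← hpar]
      refine Finset.sum_congr rfl fun φ _ => ?_
      rw [hF]
      show ‖∑ t : G, φ (x t) * (((1 : G →* ℂˣ) t : ℂ))⁻¹‖ ^ 2 / _ = _
      rw [hP φ]
    rw [← hEsum]
    linarith [h2, h3]
  -- final arithmetic
  have hgoalsum : ∑ φ ∈ Φ.filter (fun φ => ∀ μ : H →* ℂˣ, φ ≠ fun i => ((μ (ν i) : ℂ))),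
      ‖∑ t : G, φ (x t) * (((1 : G →* ℂˣ) t : ℂ))⁻¹‖ ^ 2 /
        (∑ i, (w i)⁻¹ * ‖φ i‖ ^ 2)
      = (∑ i, w i * ((h i : ℝ)) ^ 2)
        - ((Finset.univ.filter (fun μ : H →* ℂˣ => μ.comp θ = (1 : G →* ℂˣ))).card : ℝ)
            * (Fintype.card G : ℝ) ^ 2 / m := by
    rw [hfilter]
    rw [show (∑ φ ∈ Φ \ E,
        ‖∑ t : G, φ (x t) * (((1 : G →* ℂˣ) t : ℂ))⁻¹‖ ^ 2 /
          (∑ i, (w i)⁻¹ * ‖φ i‖ ^ 2)) = ∑ φ ∈ Φ \ E, F φ from rfl, hsplit]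
    rw [mul_div_assoc]
  have hle1 : ∀ i, (h i : ℝ) ≤ ((h i : ℝ)) ^ 2 := by
    intro i
    rcases Nat.eq_zero_or_pos (h i) with h0 | h1
    · rw [h0]; norm_num
    · have : (1 : ℝ) ≤ (h i : ℝ) := by exact_mod_cast h1
      nlinarith
  have hcard : ∀ i, (h i : ℝ) ≤ (Fintype.card G : ℝ) := by
    intro i
    have : h i ≤ Fintype.card G := by
      rw [hh]
      simpa [Finset.card_univ] using Finset.card_filter_le univ (fun t : G => x t = i)
    exact_mod_cast this
  have hA : (∑ i, w i * ((Finset.univ.filter (fun t : G => x t = i)).card : ℝ))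
      = ∑ i, w i * ((h i : ℝ)) := rfl
  have hM : (∑ i, (w i)⁻¹) = m := rfl
  refine ⟨?_, ?_, ?_⟩
  · rw [hgoalsum, hA]
    have : (∑ i, w i * ((h i : ℝ))) ≤ ∑ i, w i * ((h i : ℝ)) ^ 2 :=
      Finset.sum_le_sum fun i _ => mul_le_mul_of_nonneg_left (hle1 i) (hw i).le
    linarith
  · rw [hgoalsum, hA]
    have : (∑ i, w i * ((h i : ℝ)) ^ 2) ≤ (Fintype.card G : ℝ) * ∑ i, w i * ((h i : ℝ)) := by
      rw [Finset.mul_sum]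
      refine Finset.sum_le_sum fun i _ => ?_
      have h0 : (0 : ℝ) ≤ (h i : ℝ) := Nat.cast_nonneg _
      have h1 : ((h i : ℝ)) ^ 2 ≤ (Fintype.card G : ℝ) * (h i : ℝ) := by
        nlinarith [hcard i, h0]
      calc w i * ((h i : ℝ)) ^ 2 ≤ w i * ((Fintype.card G : ℝ) * (h i : ℝ)) :=
            mul_le_mul_of_nonneg_left h1 (hw i).le
        _ = (Fintype.card G : ℝ) * (w i * (h i : ℝ)) := by ring
    linarith
  · rw [hgoalsum, hA]
    constructor
    · intro heq
      have heq2 : (∑ i, w i * ((h i : ℝ))) = ∑ i, w i * ((h i : ℝ)) ^ 2 := by linarith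
      have hterm := (Finset.sum_eq_sum_iff_of_le
        (fun i _ => mul_le_mul_of_nonneg_left (hle1 i) (hw i).le)).1 heq2
      intro i
      have h4 : ((h i : ℝ)) ^ 2 = (h i : ℝ) :=
        mul_left_cancel₀ (hw i).ne' (hterm i (Finset.mem_univ i)).symm
      show h i ≤ 1
      by_contra hgt
      push_neg at hgt
      have h6 : (2 : ℝ) ≤ (h i : ℝ) := by exact_mod_cast hgt
      nlinarith [h4, h6]
    · intro hle
      have hterm : ∀ i, ((h i : ℝ)) ^ 2 = (h i : ℝ) := by
        intro i
        rcases Nat.le_one_iff_eq_zero_or_eq_one.1 (hle i) with h0 | h0 <;>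
          · show ((h i : ℝ)) ^ 2 = (h i : ℝ)
            rw [show h i = (Finset.univ.filter (fun t : G => x t = i)).card from rfl, h0]
            norm_num
      have : (∑ i, w i * ((h i : ℝ)) ^ 2) = ∑ i, w i * ((h i : ℝ)) :=
        Finset.sum_congr rfl fun i _ => by rw [hterm i]
      linarith
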